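/- arXiv:2410.04767 — 4 statements merged into one kernel-verified Lean document; each statement's English description precedes it below -/
import Mathlib

section
/- For every real number q with 0 < q < 1, the infinite product ∏_{n=1}^∞ (1 - q^n) equals the two-sided sum ∑_{k∈ℤ} (-1)^k q^{(3k² - k)/2} (Euler's pentagonal number theorem). -/
open Finset

namespace EulerPent

noncomputable def P (q : ℝ) (n : ℕ) : ℝ := ∏ k ∈ Finset.range n, (1 - q ^ (k + 1))

noncomputable def R (q : ℝ) (i n : ℕ) : ℝ := ∏ k ∈ Finset.Ico i n, (1 - q ^ (k + 1))

def T : ℕ → ℕ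
  | 0 => 0
  | n + 1 => T n + (n + 1)

noncomputable def t (q : ℝ) (n i : ℕ) : ℝ :=
  (-1) ^ i * q ^ (T i + n * i) * R q i n

noncomputable def a (q : ℝ) (n : ℕ) : ℕ → ℝ
  | 0 => 0
  | i + 1 => (-1) ^ (i + 1) * q ^ (T (i + 1) + n * (i + 1)) * R q i n

noncomputable def f (q : ℝ) (k : ℤ) : ℝ := (-1 : ℝ) ^ k * q ^ ((3 * (k : ℝ) ^ 2 - (k : ℝ)) / 2)

lemma twoT (j : ℕ) : 2 * T j = j * (j + 1) := by
  induction j with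
  | zero => rfl
  | succ n ih => show 2 * (T n + (n+1)) = _; rw [mul_add, ih]; ring

variable {q : ℝ}

lemma R_zero (n : ℕ) : R q 0 n = P q n := by
  rw [R, P, Finset.range_eq_Ico]

lemma R_self (i : ℕ) : R q i i = 1 := by rw [R, Finset.Ico_self, Finset.prod_empty]

lemma R_succ_top {i n : ℕ} (h : i ≤ n) : R q i (n + 1) = R q i n * (1 - q ^ (n + 1)) :=
  Finset.prod_Ico_succ_top (by omega) _

lemma R_succ_bot {i n : ℕ} (h : i < n) : R q i n = (1 - q ^ (i + 1)) * R q (i + 1) n :=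
  Finset.prod_eq_prod_Ico_succ_bot h _

lemma f_ofNat (j e : ℕ) (h : 2 * e + j = 3 * j ^ 2) :
    f q (j : ℤ) = (-1 : ℝ) ^ j * q ^ e := by
  have h' : ((2 * e + j : ℕ) : ℝ) = ((3 * j ^ 2 : ℕ) : ℝ) := by rw [h]
  simp only [f, Int.cast_natCast, zpow_natCast]
  have hexp : (3 * (j : ℝ) ^ 2 - (j : ℝ)) / 2 = ((e : ℕ) : ℝ) := by
    push_cast at h' ⊢; linarith
  rw [hexp, Real.rpow_natCast]

lemma f_negNat (j e : ℕ) (h : 2 * e = 3 * j ^ 2 + j) :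
    f q (-(j : ℤ)) = (-1 : ℝ) ^ j * q ^ e := by
  have h' : ((2 * e : ℕ) : ℝ) = ((3 * j ^ 2 + j : ℕ) : ℝ) := by rw [h]
  simp only [f, Int.cast_neg, Int.cast_natCast, zpow_neg, zpow_natCast]
  have hexp : (3 * (-(j : ℝ)) ^ 2 - (-(j : ℝ))) / 2 = ((e : ℕ) : ℝ) := by
    push_cast at h' ⊢; linarith
  rw [hexp, Real.rpow_natCast, ← inv_pow, inv_neg_one]

lemma step (n i : ℕ) (hi : i ≤ n) :
    t q n i - t q (n + 1) i = a q n i - a q n (i + 1) := by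
  cases i with
  | zero =>
      show (-1:ℝ)^(0:ℕ) * q ^ (T 0 + n * 0) * R q 0 n
          - (-1:ℝ)^(0:ℕ) * q ^ (T 0 + (n+1) * 0) * R q 0 (n+1)
          = 0 - ((-1:ℝ)^(0+1) * q ^ (T (0+1) + n * (0+1)) * R q 0 n)
      rw [R_succ_top (Nat.zero_le n)]
      show (-1:ℝ)^(0:ℕ) * q ^ (0 + n * 0) * R q 0 n
          - (-1:ℝ)^(0:ℕ) * q ^ (0 + (n+1) * 0) * (R q 0 n * (1 - q ^ (n+1)))
          = 0 - ((-1:ℝ)^(0+1) * q ^ (0 + 1 + n * 1) * R q 0 n)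
      ring
  | succ j =>
      have e1 : T (j+1) + (n+1) * (j+1) = (T (j+1) + n * (j+1)) + (j+1) := by ring
      have e2 : T (j+1+1) + n * (j+1+1) = (T (j+1) + n * (j+1)) + ((j+1) + (n+1)) := by
        show (T (j+1) + (j+1+1)) + n * (j+1+1) = _
        ring
      show _ = a q n (j+1) - a q n (j+1+1)
      simp only [t, a, e1, e2, pow_add]
      rw [R_succ_top hi, R_succ_bot (show j < n by omega)]
      ring

lemma shanks (n : ℕ) :
    ∑ j ∈ Finset.Icc (-(n : ℤ)) (n : ℤ), f q j = ∑ i ∈ Finset.range (n + 1), t q n i := by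
  induction n with
  | zero =>
      rw [Nat.cast_zero, neg_zero, Finset.Icc_self, Finset.sum_singleton, Finset.range_one,
        Finset.sum_singleton]
      show f q 0 = (-1:ℝ)^(0:ℕ) * q ^ (T 0 + 0 * 0) * R q 0 0
      rw [f, R_self, show T 0 = 0 from rfl]
      norm_num
  | succ n ih =>
      have htel : ∑ i ∈ Finset.range (n+1), (t q n i - t q (n+1) i)
          = a q n 0 - a q n (n+1) := by
        rw [Finset.sum_congr rfl fun i hi => step n i (by
          simpa [Nat.lt_succ_iff] using Finset.mem_range.mp hi)]
        exact Finset.sum_range_sub' (a q n) (n+1)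
      have hsub : ∑ i ∈ Finset.range (n+1), t q (n+1) i
          = (∑ i ∈ Finset.range (n+1), t q n i) + a q n (n+1) := by
        rw [Finset.sum_sub_distrib] at htel
        have ha0 : a q n 0 = 0 := rfl
        rw [ha0, zero_sub] at htel
        linarith
      have h2T : 2 * T (n+1) = (n+1) * (n+2) := by
        have := twoT (n+1); linarith [this]
      have ha : a q n (n+1) = f q ((n+1 : ℕ) : ℤ) := by
        rw [f_ofNat (n+1) (T (n+1) + n * (n+1)) (by rw [mul_add, h2T]; ring)]
        show (-1:ℝ)^(n+1) * q ^ (T (n+1) + n * (n+1)) * R q n n = _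
        rw [R_self, mul_one]
      have ht : t q (n+1) (n+1) = f q (-((n+1 : ℕ) : ℤ)) := by
        rw [f_negNat (n+1) (T (n+1) + (n+1) * (n+1)) (by rw [mul_add, h2T]; ring)]
        rw [t, R_self, mul_one]
      have hset : Finset.Icc (-((n+1 : ℕ) : ℤ)) ((n+1 : ℕ) : ℤ)
          = insert (-((n+1 : ℕ) : ℤ)) (insert ((n+1 : ℕ) : ℤ)
              (Finset.Icc (-(n : ℤ)) (n : ℤ))) := by
        ext x
        simp only [Finset.mem_Icc, Finset.mem_insert]
        push_cast
        omega
      rw [hset, Finset.sum_insert (by simp only [Finset.mem_insert, Finset.mem_Icc]; push_cast; omega),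
        Finset.sum_insert (by simp only [Finset.mem_Icc]; push_cast; omega), ih,
        Finset.sum_range_succ (t q (n+1)) (n+1), hsub, ← ha, ← ht]
      ring

lemma fac_pos (hq0 : 0 < q) (hq1 : q < 1) (k : ℕ) : 0 < 1 - q ^ (k + 1) := by
  have : q ^ (k+1) < 1 := pow_lt_one₀ hq0.le hq1 (Nat.succ_ne_zero k)
  linarith

lemma R_nonneg (hq0 : 0 < q) (hq1 : q < 1) (i n : ℕ) : 0 ≤ R q i n :=
  Finset.prod_nonneg fun k _ => (fac_pos hq0 hq1 k).le

lemma R_le_one (hq0 : 0 < q) (hq1 : q < 1) (i n : ℕ) : R q i n ≤ 1 :=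
  Finset.prod_le_one (fun k _ => (fac_pos hq0 hq1 k).le)
    (fun k _ => by have := pow_pos hq0 (k+1); linarith)


end EulerPent


open scoped Real
open Finset Filter Topology EulerPent

theorem euler_pentagonal (q : ℝ) (hq0 : 0 < q) (hq1 : q < 1) :
    (∏' n : ℕ, (1 - q ^ (n + 1))) =
      ∑' k : ℤ, (-1 : ℝ) ^ k * q ^ ((3 * (k : ℝ) ^ 2 - (k : ℝ)) / 2) := by
  have h1q : 0 < 1 - q := by linarith
  -- Multipliability of the product
  have hlog : Summable (fun n : ℕ => Real.log (1 - q ^ (n + 1))) := by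
    apply Summable.of_abs
    refine Summable.of_nonneg_of_le (fun n => abs_nonneg _) (fun n => ?_)
      ((summable_geometric_of_lt_one hq0.le hq1).mul_right (q / (1 - q)))
    have hy : 0 < 1 - q ^ (n + 1) := fac_pos hq0 hq1 n
    have hyq : 1 - q ≤ 1 - q ^ (n + 1) := by
      have h := pow_le_pow_of_le_one hq0.le hq1.le (show 1 ≤ n + 1 by omega)
      rw [pow_one] at h
      linarith
    have hy1 : 1 - q ^ (n + 1) ≤ 1 := by have := pow_pos hq0 (n + 1); linarith
    rw [abs_of_nonpos (Real.log_nonpos hy.le hy1), ← Real.log_inv]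
    calc Real.log (1 - q ^ (n + 1))⁻¹ ≤ (1 - q ^ (n + 1))⁻¹ - 1 :=
          by have := Real.log_le_sub_one_of_pos (inv_pos.mpr hy); linarith
      _ = q ^ (n + 1) / (1 - q ^ (n + 1)) := by field_simp; ring
      _ ≤ q ^ (n + 1) / (1 - q) :=
          div_le_div_of_nonneg_left (pow_pos hq0 (n+1)).le h1q hyq
      _ = q ^ n * (q / (1 - q)) := by rw [pow_succ]; ring
  have hmul : Multipliable (fun n : ℕ => 1 - q ^ (n + 1)) :=
    Real.multipliable_of_summable_log
      (fun n => fac_pos hq0 hq1 n) hlog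
  have hP : Tendsto (fun n => P q n) atTop (𝓝 (∏' n : ℕ, (1 - q ^ (n + 1)))) := by
    simpa [P] using hmul.hasProd.tendsto_prod_nat
  -- Summability of the pentagonal series
  have habs : ∀ k : ℤ, |f q k| = q ^ ((3 * (k : ℝ) ^ 2 - (k : ℝ)) / 2) := by
    intro k
    rw [f, abs_mul, abs_of_pos (Real.rpow_pos_of_pos hq0 _)]
    rcases k.even_or_odd with h | h
    · rw [h.neg_one_zpow, abs_one, one_mul]
    · rw [Odd.neg_one_zpow h, abs_neg, abs_one, one_mul]
  have hfb : ∀ (k : ℤ) (j : ℕ), (j : ℝ) ≤ (3 * (k : ℝ) ^ 2 - (k : ℝ)) / 2 →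
      |f q k| ≤ q ^ j := by
    intro k j h
    rw [habs k, ← Real.rpow_natCast q j]
    exact Real.rpow_le_rpow_of_exponent_ge hq0 hq1.le h
  have hjsq : ∀ j : ℕ, (j : ℝ) ≤ (j : ℝ) ^ 2 := by
    intro j
    exact_mod_cast Nat.le_self_pow (by norm_num) j
  have hs1 : Summable (fun j : ℕ => f q (j : ℤ)) := by
    refine Summable.of_abs (Summable.of_nonneg_of_le (fun j => abs_nonneg _)
      (fun j => hfb (j : ℤ) j ?_) (summable_geometric_of_lt_one hq0.le hq1))
    have := hjsq j; push_cast; linarith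
  have hs2 : Summable (fun j : ℕ => f q (-(j : ℤ))) := by
    refine Summable.of_abs (Summable.of_nonneg_of_le (fun j => abs_nonneg _)
      (fun j => hfb (-(j : ℤ)) j ?_) (summable_geometric_of_lt_one hq0.le hq1))
    have := hjsq j; have : (0:ℝ) ≤ (j:ℝ) := Nat.cast_nonneg j
    push_cast
    nlinarith [hjsq j]
  have hsf : Summable (f q) := Summable.of_nat_of_neg hs1 hs2
  have hG : Tendsto (fun n : ℕ => ∑ j ∈ Finset.Icc (-(n : ℤ)) (n : ℤ), f q j) atTop
      (𝓝 (∑' k, f q k)) := by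
    have hmono : Monotone (fun n : ℕ => Finset.Icc (-(n : ℤ)) (n : ℤ)) := by
      intro m n h
      apply Finset.Icc_subset_Icc <;> [skip; exact_mod_cast h]
      simp only [neg_le_neg_iff]
      exact_mod_cast h
    have hexh : ∀ x : ℤ, ∃ n : ℕ, x ∈ Finset.Icc (-(n : ℤ)) (n : ℤ) := by
      intro x
      exact ⟨x.natAbs, by simp only [Finset.mem_Icc]; omega⟩
    exact hsf.hasSum.comp (tendsto_atTop_finset_of_monotone hmono hexh)
  -- remainder tends to zero
  have ht0 : ∀ n, t q n 0 = P q n := by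
    intro n
    show (-1:ℝ) ^ (0:ℕ) * q ^ (T 0 + n * 0) * R q 0 n = P q n
    rw [R_zero, show T 0 = 0 from rfl]
    norm_num
  have hRn : Tendsto (fun n => (∑ i ∈ Finset.range (n + 1), t q n i) - P q n) atTop
      (𝓝 0) := by
    refine squeeze_zero_norm (f := fun n => (∑ i ∈ Finset.range (n + 1), t q n i) - P q n)
      (a := fun n => q ^ n * (1 - q)⁻¹) (fun n => ?_) ?_
    · 
      have hrw : (∑ i ∈ Finset.range (n + 1), t q n i) - P q n
          = ∑ i ∈ Finset.range n, t q n (i + 1) := by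
        rw [Finset.sum_range_succ' (t q n) n, ht0 n]; ring
      show ‖(∑ i ∈ Finset.range (n + 1), t q n i) - P q n‖ ≤ q ^ n * (1 - q)⁻¹
      rw [hrw]
      calc ‖∑ i ∈ Finset.range n, t q n (i + 1)‖
          ≤ ∑ i ∈ Finset.range n, ‖t q n (i + 1)‖ := norm_sum_le _ _
        _ ≤ ∑ i ∈ Finset.range n, q ^ n * q ^ i := by
            apply Finset.sum_le_sum
            intro i hi
            have hin : i < n := Finset.mem_range.mp hi
            have h1n : 1 ≤ n := by omega
            have hRb : |R q (i+1) n| ≤ 1 := by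
              rw [abs_of_nonneg (R_nonneg hq0 hq1 _ _)]
              exact R_le_one hq0 hq1 _ _
            have hexp : n + i ≤ T (i+1) + n * (i+1) := by
              have h2T := twoT (i+1)
              nlinarith [T (i+1), h2T]
            calc ‖t q n (i+1)‖ = |(-1:ℝ)^(i+1)| * |q ^ (T (i+1) + n*(i+1))| * |R q (i+1) n| := by
                  rw [t, Real.norm_eq_abs, abs_mul, abs_mul]
              _ ≤ 1 * q ^ (T (i+1) + n*(i+1)) * 1 := by
                  rw [abs_pow, abs_neg, abs_one, one_pow,
                    abs_of_nonneg (pow_nonneg hq0.le _)]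
                  exact mul_le_mul_of_nonneg_left hRb (by positivity)
              _ = q ^ (T (i+1) + n*(i+1)) := by ring
              _ ≤ q ^ (n + i) := pow_le_pow_of_le_one hq0.le hq1.le hexp
              _ = q ^ n * q ^ i := pow_add q n i
        _ = q ^ n * ∑ i ∈ Finset.range n, q ^ i := by rw [Finset.mul_sum]
        _ ≤ q ^ n * (1 - q)⁻¹ := by
            apply mul_le_mul_of_nonneg_left _ (pow_nonneg hq0.le n)
            rw [← tsum_geometric_of_lt_one hq0.le hq1]
            exact Summable.sum_le_tsum _ (fun i _ => pow_nonneg hq0.le i)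
              (summable_geometric_of_lt_one hq0.le hq1)
    · simpa using (tendsto_pow_atTop_nhds_zero_of_lt_one hq0.le hq1).mul_const (1 - q)⁻¹
  have heq : ∀ n : ℕ, (∑ j ∈ Finset.Icc (-(n : ℤ)) (n : ℤ), f q j)
      - ((∑ i ∈ Finset.range (n + 1), t q n i) - P q n) = P q n := by
    intro n; rw [shanks]; ring
  have hfinal : Tendsto (fun n => P q n) atTop (𝓝 (∑' k, f q k)) := by
    have h := hG.sub hRn
    rw [sub_zero] at h
    simpa only [heq] using h
  have := tendsto_nhds_unique hP hfinal
  simpa only [f] using this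
end

section
/- For complex numbers z and y with |z| < 1 and y ≠ 0, one has ∏_{n=1}^∞ (1 - z^{2n})(1 + z^{2n-1} y)(1 + z^{2n-1} y^{-1}) = ∑_{k∈ℤ} z^{k²} y^k (Jacobi triple product identity). -/
open Filter Finset Topology

namespace JTP

lemma prod_one_add_sub_one_norm {ι : Type*} (s : Finset ι) (g : ι → ℂ) :
    ‖(∏ i ∈ s, (1 + g i)) - 1‖ ≤ (∏ i ∈ s, (1 + ‖g i‖)) - 1 := by
  classical
  induction s using Finset.induction with
  | empty => simp
  | @insert a s ha ih =>
    rw [Finset.prod_insert ha, Finset.prod_insert ha]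
    have key : (1 + g a) * ∏ i ∈ s, (1 + g i) - 1
        = (1 + g a) * ((∏ i ∈ s, (1 + g i)) - 1) + g a := by ring
    rw [key]
    have h1 : ‖(1 + g a) * ((∏ i ∈ s, (1 + g i)) - 1) + g a‖
        ≤ ‖1 + g a‖ * ‖(∏ i ∈ s, (1 + g i)) - 1‖ + ‖g a‖ := by
      refine le_trans (norm_add_le _ _) ?_
      rw [norm_mul]
    refine h1.trans ?_
    have h2 : ‖(1 : ℂ) + g a‖ ≤ 1 + ‖g a‖ := (norm_add_le _ _).trans (by simp)
    have hpos : (0:ℝ) ≤ (∏ i ∈ s, (1 + ‖g i‖)) - 1 := by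
      have : (1:ℝ) ≤ ∏ i ∈ s, (1 + ‖g i‖) := by
        calc (1:ℝ) = ∏ _i ∈ s, 1 := (Finset.prod_const_one).symm
          _ ≤ ∏ i ∈ s, (1 + ‖g i‖) := Finset.prod_le_prod (fun i _ => zero_le_one)
              (fun i _ => le_add_of_nonneg_right (norm_nonneg _))
      linarith
    have h3 : ‖1 + g a‖ * ‖(∏ i ∈ s, (1 + g i)) - 1‖ ≤ (1 + ‖g a‖) * ((∏ i ∈ s, (1 + ‖g i‖)) - 1) :=
      mul_le_mul h2 ih (norm_nonneg _) (by positivity)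
    nlinarith [norm_nonneg (g a)]

lemma prod_one_add_le_exp {ι : Type*} (s : Finset ι) (g : ι → ℝ) (hg : ∀ i, 0 ≤ g i) :
    (∏ i ∈ s, (1 + g i)) ≤ Real.exp (∑ i ∈ s, g i) := by
  rw [Real.exp_sum]
  refine Finset.prod_le_prod (fun i _ => by nlinarith [hg i]) fun i _ => ?_
  have := Real.add_one_le_exp (g i); linarith

lemma multipliable_one_add (f : ℕ → ℂ) (hf : Summable fun n => ‖f n‖) :
    Multipliable (fun n => 1 + f n) := by
  set B := Real.exp (∑' n, ‖f n‖) with hB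
  have hBpos : 0 < B := Real.exp_pos _
  have hbound : ∀ s : Finset ℕ, ‖∏ i ∈ s, (1 + f i)‖ ≤ B := by
    intro s
    calc ‖∏ i ∈ s, (1 + f i)‖ ≤ ∏ i ∈ s, (1 + ‖f i‖) := by
          refine (Finset.norm_prod_le _ _).trans ?_
          refine Finset.prod_le_prod (fun i _ => norm_nonneg _) fun i _ => ?_
          exact (norm_add_le _ _).trans (by simp)
      _ ≤ Real.exp (∑ i ∈ s, ‖f i‖) := prod_one_add_le_exp _ _ fun i => norm_nonneg _
      _ ≤ B := Real.exp_le_exp.2 (Summable.sum_le_tsum s (fun i _ => norm_nonneg _) hf)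
  have hcauchy : CauchySeq (fun s : Finset ℕ => ∏ i ∈ s, (1 + f i)) := by
    rw [Metric.cauchySeq_iff']
    intro ε hε
    set δ := Real.log (1 + ε / (2 * B)) with hδ
    have hδpos : 0 < δ := Real.log_pos (by nlinarith [div_pos hε (by linarith : (0:ℝ) < 2*B)])
    obtain ⟨F₀, hF₀⟩ := hf.vanishing (Metric.ball_mem_nhds 0 hδpos)
    refine ⟨F₀, fun s hs => ?_⟩
    have hsub : F₀ ⊆ s := hs
    have hsplit : ∏ i ∈ s, (1 + f i) = (∏ i ∈ s \ F₀, (1 + f i)) * ∏ i ∈ F₀, (1 + f i) :=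
      (Finset.prod_sdiff hsub).symm
    have hdisj : Disjoint (s \ F₀) F₀ := Finset.sdiff_disjoint
    have hsum_small : ∑ i ∈ s \ F₀, ‖f i‖ < δ := by
      have := hF₀ _ hdisj
      rw [Metric.mem_ball, dist_zero_right] at this
      exact (le_abs_self _).trans_lt (by simpa [Real.norm_eq_abs] using this)
    have hkey : ‖(∏ i ∈ s \ F₀, (1 + f i)) - 1‖ ≤ Real.exp δ - 1 := by
      refine (prod_one_add_sub_one_norm _ _).trans ?_
      have := prod_one_add_le_exp (s \ F₀) (fun i => ‖f i‖) fun i => norm_nonneg _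
      have h2 : Real.exp (∑ i ∈ s \ F₀, ‖f i‖) ≤ Real.exp δ := Real.exp_le_exp.2 hsum_small.le
      linarith
    rw [dist_eq_norm, hsplit]
    calc ‖(∏ i ∈ s \ F₀, (1 + f i)) * ∏ i ∈ F₀, (1 + f i) - ∏ i ∈ F₀, (1 + f i)‖
        = ‖(∏ i ∈ s \ F₀, (1 + f i)) - 1‖ * ‖∏ i ∈ F₀, (1 + f i)‖ := by
          rw [← norm_mul]; ring_nf
      _ ≤ (Real.exp δ - 1) * B := by
          refine mul_le_mul hkey (hbound _) (norm_nonneg _) ?_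
          have := Real.exp_pos δ
          nlinarith [Real.add_one_le_exp δ, hδpos]
      _ = ε / 2 := by
          rw [hδ, Real.exp_log (by positivity)]
          field_simp
          ring
      _ < ε := by linarith
  obtain ⟨a, ha⟩ := cauchySeq_tendsto_of_complete hcauchy
  exact ⟨a, ha⟩

lemma tprod_one_add_sub_one_norm_le (f : ℕ → ℂ) (hf : Summable fun n => ‖f n‖) :
    ‖(∏' n, (1 + f n)) - 1‖ ≤ Real.exp (∑' n, ‖f n‖) - 1 := by
  have hm := multipliable_one_add f hf
  have htend : Tendsto (fun s : Finset ℕ => ∏ i ∈ s, (1 + f i)) atTop (𝓝 (∏' n, (1 + f n))) :=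
    hm.hasProd
  have : Tendsto (fun s : Finset ℕ => ‖(∏ i ∈ s, (1 + f i)) - 1‖) atTop
      (𝓝 ‖(∏' n, (1 + f n)) - 1‖) := ((htend.sub tendsto_const_nhds).norm)
  refine le_of_tendsto this (Eventually.of_forall fun s => ?_)
  refine (prod_one_add_sub_one_norm _ _).trans ?_
  have h1 := prod_one_add_le_exp s (fun i => ‖f i‖) fun i => norm_nonneg _
  have h2 : Real.exp (∑ i ∈ s, ‖f i‖) ≤ Real.exp (∑' n, ‖f n‖) :=
    Real.exp_le_exp.2 (Summable.sum_le_tsum s (fun i _ => norm_nonneg _) hf)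
  linarith

end JTP

open Filter Finset Topology

namespace JTP2

noncomputable def hp (z : ℂ) (j : ℕ) : ℂ := ∏ n ∈ Finset.range j, (1 - z ^ (2*(n+1)))

noncomputable def gb (z : ℂ) (m k : ℕ) : ℂ := if k ≤ m then hp z m / (hp z k * hp z (m-k)) else 0

variable {z : ℂ} (hz : ‖z‖ < 1)

include hz

lemma factor_ne {n : ℕ} (hn : n ≠ 0) : (1 : ℂ) - z ^ n ≠ 0 := by
  intro h
  have h1 : z ^ n = 1 := by linear_combination -h
  have h2 : ‖z ^ n‖ < 1 := by
    rw [norm_pow]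
    exact pow_lt_one₀ (norm_nonneg z) hz hn
  rw [h1, norm_one] at h2
  exact lt_irrefl _ h2

lemma hp_ne (j : ℕ) : hp z j ≠ 0 :=
  Finset.prod_ne_zero_iff.2 fun n _ => factor_ne hz (by omega)

omit hz

lemma hp_zero : hp z 0 = 1 := by simp [hp]

lemma hp_succ (j : ℕ) : hp z (j+1) = hp z j * (1 - z ^ (2*(j+1))) := Finset.prod_range_succ _ _

include hz

lemma gb_zero (m : ℕ) : gb z m 0 = 1 := by
  simp [gb, hp_zero, div_self (hp_ne hz m)]

lemma gb_diag (m : ℕ) : gb z m m = 1 := by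
  simp [gb, hp_zero, div_self (hp_ne hz m)]

omit hz

lemma gb_of_gt {m k : ℕ} (h : m < k) : gb z m k = 0 := by
  simp [gb, not_le.2 h]

include hz

lemma pascal {k m : ℕ} (hkm : k ≤ m) :
    gb z (m+1) (k+1) = gb z m (k+1) + z^(2*(m-k)) * gb z m k := by
  rcases eq_or_lt_of_le hkm with rfl | hlt
  · simp [gb_diag hz, gb_of_gt (lt_add_one k)]
  · obtain ⟨d, rfl⟩ : ∃ d, m = k + d + 1 := ⟨m - k - 1, by omega⟩
    rw [show k + d + 1 - k = d + 1 from by omega]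
    have e1 : gb z (k+d+1+1) (k+1) = hp z (k+d+2) / (hp z (k+1) * hp z (d+1)) := by
      rw [gb, if_pos (by omega), show k+d+1+1 - (k+1) = d+1 from by omega,
        show k+d+1+1 = k+d+2 from by omega]
    have e2 : gb z (k+d+1) (k+1) = hp z (k+d+1) / (hp z (k+1) * hp z d) := by
      rw [gb, if_pos (by omega), show k+d+1 - (k+1) = d from by omega]
    have e3 : gb z (k+d+1) k = hp z (k+d+1) / (hp z k * hp z (d+1)) := by
      rw [gb, if_pos (by omega), show k+d+1 - k = d+1 from by omega]
    rw [e1, e2, e3]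
    have r1 : hp z (k+d+2) = hp z (k+d+1) * (1 - z^(2*(k+d+2))) := hp_succ _
    have r2 : hp z (d+1) = hp z d * (1 - z^(2*(d+1))) := hp_succ _
    have r3 : hp z (k+1) = hp z k * (1 - z^(2*(k+1))) := hp_succ _
    rw [r1, r2, r3]
    have hK := hp_ne hz k
    have hD := hp_ne hz d
    have hA := hp_ne hz (k+d+1)
    have f1 := factor_ne hz (n := 2*(d+1)) (by omega)
    have f2 := factor_ne hz (n := 2*(k+1)) (by omega)
    field_simp
    ring
    
lemma qbinom (t : ℂ) (m : ℕ) :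
    ∏ j ∈ Finset.range m, (1 + t * z^(2*j)) =
      ∑ k ∈ Finset.range (m+1), z^(k*(k-1)) * gb z m k * t^k := by
  induction m with
  | zero => simp [gb_zero hz]
  | succ m ih =>
    rw [Finset.prod_range_succ, ih]
    rw [Finset.sum_range_succ' (fun k => z^(k*(k-1)) * gb z (m+1) k * t^k)]
    simp only [Nat.add_sub_cancel, Nat.succ_sub_one]
    have hsplit : ∀ k ∈ Finset.range (m+1),
        z^((k+1)*k) * gb z (m+1) (k+1) * t^(k+1)
          = z^((k+1)*k) * gb z m (k+1) * t^(k+1)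
            + (z^(k*(k-1)) * gb z m k * t^k) * (t * z^(2*m)) := by
      intro k hk
      have hkm : k ≤ m := by simpa using Nat.lt_succ_iff.1 (Finset.mem_range.1 hk)
      rw [pascal hz hkm]
      have hpow : z^((k+1)*k) * z^(2*(m-k)) = z^(k*(k-1)) * z^(2*m) := by
        obtain ⟨c, rfl⟩ : ∃ c, m = k + c := ⟨m - k, by omega⟩
        rw [← pow_add, ← pow_add, show k + c - k = c from by omega]
        congr 1
        cases k with
        | zero => simp
        | succ n => simp only [Nat.add_sub_cancel, Nat.succ_sub_one]; ring
      calc z^((k+1)*k) * (gb z m (k+1) + z^(2*(m-k)) * gb z m k) * t^(k+1)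
          = z^((k+1)*k) * gb z m (k+1) * t^(k+1)
            + (z^((k+1)*k) * z^(2*(m-k))) * gb z m k * t^(k+1) := by ring
        _ = _ := by rw [hpow]; ring
    rw [Finset.sum_congr rfl hsplit, Finset.sum_add_distrib]
    have h1 : (∑ k ∈ Finset.range (m+1), z^((k+1)*k) * gb z m (k+1) * t^(k+1))
        + z^(0*(0-1)) * gb z (m+1) 0 * t^0
        = ∑ k ∈ Finset.range (m+1), z^(k*(k-1)) * gb z m k * t^k := by
      rw [gb_zero hz]
      have := (Finset.sum_range_succ' (fun k => z^(k*(k-1)) * gb z m k * t^k) (m+1)).symm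
      simp only [Nat.add_sub_cancel] at this
      rw [show z ^ (0*(0-1)) * 1 * t ^ 0 = z ^ (0*(0-1)) * gb z m 0 * t ^ 0 by
        rw [gb_zero hz], this, Finset.sum_range_succ, gb_of_gt (lt_add_one m)]
      ring
    have h2 : (∑ k ∈ Finset.range (m+1), (z^(k*(k-1)) * gb z m k * t^k) * (t * z^(2*m)))
        = (∑ k ∈ Finset.range (m+1), z^(k*(k-1)) * gb z m k * t^k) * (t * z^(2*m)) := by
      rw [← Finset.sum_mul]
    rw [add_right_comm, h1, h2]
    ring


omit hz in
lemma sum_odd (N : ℕ) : ∑ j ∈ Finset.range N, (2*j+1) = N^2 := by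
  induction N with
  | zero => simp
  | succ n ih => rw [Finset.sum_range_succ, ih]; ring

omit hz in
lemma cast_mul_sub_one (k : ℕ) : ((k*(k-1) : ℕ) : ℤ) = (k:ℤ) * ((k:ℤ)-1) := by
  cases k with
  | zero => simp
  | succ n => push_cast [Nat.add_sub_cancel]; ring

lemma finite_jacobi (hz0 : z ≠ 0) {y : ℂ} (hy : y ≠ 0) (N : ℕ) :
    ∏ n ∈ Finset.range N, ((1 - z ^ (2 * (n + 1))) * (1 + z ^ (2 * (n + 1) - 1) * y) *
        (1 + z ^ (2 * (n + 1) - 1) * y⁻¹))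
      = ∑ k ∈ Finset.range (2*N+1),
          hp z N * gb z (2*N) k * z ^ (((k:ℤ) - N)^2) * y ^ ((k:ℤ) - N) := by
  set t : ℂ := y * z ^ ((1:ℤ) - 2*N) with ht
  -- Step 1: split triple product
  have step1 : ∏ n ∈ Finset.range N, ((1 - z ^ (2 * (n + 1))) * (1 + z ^ (2 * (n + 1) - 1) * y) *
        (1 + z ^ (2 * (n + 1) - 1) * y⁻¹))
      = hp z N * ((∏ n ∈ Finset.range N, (1 + z ^ (2*n+1) * y)) *
          (∏ n ∈ Finset.range N, (1 + z ^ (2*n+1) * y⁻¹))) := by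
    rw [hp, ← Finset.prod_mul_distrib, ← Finset.prod_mul_distrib]
    refine Finset.prod_congr rfl fun n _ => ?_
    rw [show 2*(n+1) - 1 = 2*n+1 from by omega]
    ring
  -- Step 2: the 2N-fold product splits
  have hsecond : ∀ j : ℕ, t * z ^ (2*(N+j)) = z ^ (2*j+1) * y := by
    intro j
    rw [ht, mul_assoc, ← zpow_natCast z (2*(N+j)), ← zpow_add₀ hz0]
    rw [show (1:ℤ) - 2*N + (2*(N+j) : ℕ) = ((2*j+1 : ℕ) : ℤ) from by push_cast; ring,
      zpow_natCast]
    ring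
  have hfirst : ∀ j ∈ Finset.range N, 1 + t * z ^ (2*j)
      = (fun i : ℕ => 1 + y * z ^ (-(2*(i:ℤ)+1))) (N - 1 - j) := by
    intro j hj
    have hjN : j < N := Finset.mem_range.1 hj
    simp only
    rw [ht, mul_assoc, ← zpow_natCast z (2*j), ← zpow_add₀ hz0]
    congr 2
    have : ((N - 1 - j : ℕ) : ℤ) = (N:ℤ) - 1 - j := by omega
    rw [this]
    push_cast
    ring
  have hrefl : ∏ j ∈ Finset.range N, (1 + t * z ^ (2*j))
      = ∏ j ∈ Finset.range N, (1 + y * z ^ (-(2*(j:ℤ)+1))) := by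
    rw [Finset.prod_congr rfl hfirst,
      Finset.prod_range_reflect (fun i : ℕ => 1 + y * z ^ (-(2*(i:ℤ)+1))) N]
  have hCfact : ∀ j : ℕ, 1 + y * z ^ (-(2*(j:ℤ)+1))
      = (y * (z⁻¹) ^ (2*j+1)) * (1 + z ^ (2*j+1) * y⁻¹) := by
    intro j
    have hzz : z ^ (-(2*(j:ℤ)+1)) = ((z ^ (2*j+1 : ℕ)) : ℂ)⁻¹ := by
      rw [← zpow_natCast z (2*j+1), ← zpow_neg]
      congr 1
    rw [hzz, ← inv_pow]
    have hzp : z ^ (2*j+1 : ℕ) ≠ 0 := pow_ne_zero _ hz0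
    have hA1 : z⁻¹ ^ (2*j+1) * z ^ (2*j+1) = 1 := by rw [← mul_pow, inv_mul_cancel₀ hz0, one_pow]
    have hB1 : y * y⁻¹ = 1 := mul_inv_cancel₀ hy
    linear_combination (-(y*y⁻¹)) * hA1 - hB1
  have hCprod : ∏ j ∈ Finset.range N, (1 + y * z ^ (-(2*(j:ℤ)+1)))
      = (y ^ N * (z⁻¹) ^ (N^2)) * ∏ j ∈ Finset.range N, (1 + z ^ (2*j+1) * y⁻¹) := by
    rw [Finset.prod_congr rfl (fun j _ => hCfact j), Finset.prod_mul_distrib,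
      Finset.prod_mul_distrib, Finset.prod_const, Finset.card_range,
      Finset.prod_pow_eq_pow_sum, sum_odd]
  have key := qbinom hz t (2*N)
  rw [show 2*N = N + N from by omega, Finset.prod_range_add] at key
  rw [show N + N = 2*N from by omega] at key
  have e2 : ∀ j ∈ Finset.range N, 1 + t * z ^ (2*(N+j)) = 1 + z ^ (2*j+1) * y := by
    intro j _; rw [hsecond j]
  rw [Finset.prod_congr rfl e2, hrefl, hCprod] at key
  -- now: (y^N (z⁻¹)^(N²) ∏C) * ∏B = ∑ ...
  -- so ∏B * ∏C = (y^N)⁻¹ ((z⁻¹)^(N²))⁻¹ ∑ ...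
  rw [step1]
  have hyN : (y : ℂ) ^ N ≠ 0 := pow_ne_zero _ hy
  have hzN : ((z : ℂ)⁻¹) ^ (N^2) ≠ 0 := pow_ne_zero _ (inv_ne_zero hz0)
  have hBC : (∏ n ∈ Finset.range N, (1 + z ^ (2*n+1) * y)) *
      (∏ n ∈ Finset.range N, (1 + z ^ (2*n+1) * y⁻¹))
      = ∑ k ∈ Finset.range (2*N+1),
          (y ^ N)⁻¹ * ((z⁻¹) ^ (N^2))⁻¹ * (z^(k*(k-1)) * gb z (2*N) k * t^k) := by
    rw [← Finset.mul_sum, ← key]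
    set PB := ∏ n ∈ Finset.range N, (1 + z ^ (2*n+1) * y) with hPB
    set PC := ∏ n ∈ Finset.range N, (1 + z ^ (2*n+1) * y⁻¹) with hPC
    field_simp
  rw [hBC, Finset.mul_sum]
  refine Finset.sum_congr rfl fun k hk => ?_
  -- per-term identity
  have hterm : (y ^ N)⁻¹ * ((z⁻¹) ^ (N^2))⁻¹ * (z^(k*(k-1)) * gb z (2*N) k * t^k)
      = gb z (2*N) k * (z ^ (((k:ℤ) - N)^2) * y ^ ((k:ℤ) - N)) := by
    have hA : ((z⁻¹) ^ (N^2))⁻¹ = z ^ ((N^2 : ℕ) : ℤ) := by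
      rw [inv_pow, inv_inv, zpow_natCast]
    have hB : (y ^ N)⁻¹ = y ^ (-((N:ℕ):ℤ)) := by
      rw [zpow_neg, zpow_natCast]
    have hC : z ^ (k*(k-1)) = z ^ ((k*(k-1) : ℕ) : ℤ) := (zpow_natCast _ _).symm
    have hT : t ^ k = y ^ ((k:ℕ):ℤ) * z ^ ((1 - 2*(N:ℤ)) * k) := by
      rw [ht, mul_pow, ← zpow_natCast (z ^ ((1:ℤ)-2*N)) k, ← zpow_mul, ← zpow_natCast y k]
    calc (y ^ N)⁻¹ * ((z⁻¹) ^ (N^2))⁻¹ * (z^(k*(k-1)) * gb z (2*N) k * t^k)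
        = gb z (2*N) k * ((y ^ (-((N:ℕ):ℤ)) * y ^ ((k:ℕ):ℤ)) *
            (z ^ ((N^2:ℕ):ℤ) * z ^ ((k*(k-1):ℕ):ℤ) * z ^ ((1 - 2*(N:ℤ)) * k))) := by
          rw [hA, hB, hC, hT]; ring
      _ = gb z (2*N) k * (y ^ ((k:ℤ) - N) * z ^ (((k:ℤ) - N)^2)) := by
          rw [← zpow_add₀ hy, ← zpow_add₀ hz0, ← zpow_add₀ hz0,
            show -((N:ℕ):ℤ) + ((k:ℕ):ℤ) = (k:ℤ) - N from by push_cast; ring,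
            show ((N^2:ℕ):ℤ) + ((k*(k-1):ℕ):ℤ) + (1 - 2*(N:ℤ)) * k = ((k:ℤ) - N)^2 from by
              rw [cast_mul_sub_one]; push_cast; ring]
      _ = gb z (2*N) k * (z ^ (((k:ℤ) - N)^2) * y ^ ((k:ℤ) - N)) := by ring
  rw [hterm]
  ring

end JTP2

namespace JTP3
open Filter Finset Topology JTP JTP2

lemma exists_pos_forall_le (u : ℕ → ℝ) (hpos : ∀ j, 0 < u j) (L : ℝ) (hL : 0 < L)
    (hu : Filter.Tendsto u atTop (𝓝 L)) : ∃ c, 0 < c ∧ ∀ j, c ≤ u j := by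
  have hev : ∀ᶠ j in atTop, L/2 < u j := hu.eventually (eventually_gt_nhds (by linarith))
  obtain ⟨J, hJ⟩ := hev.exists_forall_of_atTop
  have hne : (Finset.range (J+1)).Nonempty := ⟨0, by simp⟩
  set c₀ := (Finset.range (J+1)).inf' hne u with hc₀
  refine ⟨min (L/2) c₀, ?_, ?_⟩
  · refine lt_min (by linarith) ?_
    rw [hc₀, Finset.lt_inf'_iff]
    exact fun i _ => hpos i
  · intro j
    rcases le_or_gt j J with h | h
    · exact le_trans (min_le_right _ _) (Finset.inf'_le u (by simp [Finset.mem_range]; omega))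
    · exact le_trans (min_le_left _ _) (hJ j (by omega)).le

-- geometric-type summability for the triple product factors
lemma summable_geom_aux {a : ℝ} (ha0 : 0 ≤ a) (ha1 : a < 1) (c : ℝ) :
    Summable (fun n : ℕ => ((a^2)^n) * c) :=
  (summable_geometric_of_lt_one (by positivity) (by nlinarith)).mul_right c

lemma summable_sq_pow {a r : ℝ} (ha0 : 0 < a) (ha1 : a < 1) (hr : 0 < r) :
    Summable (fun n : ℕ => a^(n^2) * r^n) := by
  refine summable_of_ratio_test_tendsto_lt_one (l := 0) one_pos ?_ ?_
  · exact Eventually.of_forall fun n => by positivity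
  · have hkey : ∀ n : ℕ, ‖a^((n+1)^2) * r^(n+1)‖ / ‖a^(n^2) * r^n‖ = (a^2)^n * (a*r) := by
      intro n
      rw [Real.norm_eq_abs, Real.norm_eq_abs, abs_of_pos (by positivity),
        abs_of_pos (by positivity)]
      rw [div_eq_iff (by positivity)]
      ring
    rw [show (0:ℝ) = 0 * (a*r) from by ring]
    exact Tendsto.congr (fun n => (hkey n).symm)
      ((tendsto_pow_atTop_nhds_zero_of_lt_one (by positivity) (by nlinarith)).mul_const (a*r))

end JTP3

namespace JTP3
open Filter Finset Topology JTP JTP2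

variable {z y : ℂ}

lemma norm_lt_one (hz : ‖z‖ < 1) : ‖z‖ < 1 := by
  exact hz

lemma summable_pow_two_mul (hz : ‖z‖ < 1) :
    Summable (fun n : ℕ => ‖z‖^(2*(n+1))) := by
  refine Summable.congr (summable_geom_aux (norm_nonneg z) (norm_lt_one hz) (‖z‖^2)) ?_
  intro n
  rw [← pow_mul]
  ring

lemma sA (hz : ‖z‖ < 1) : Summable (fun n : ℕ => ‖-(z^(2*(n+1)))‖) := by
  refine Summable.congr (summable_pow_two_mul hz) ?_
  intro n
  rw [norm_neg, norm_pow]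

lemma mA (hz : ‖z‖ < 1) : Multipliable (fun n : ℕ => 1 - z^(2*(n+1))) := by
  have := multipliable_one_add _ (sA hz)
  refine this.congr fun n => ?_
  rw [sub_eq_add_neg]

lemma mBC (hz : ‖z‖ < 1) (w : ℂ) :
    Multipliable (fun n : ℕ => 1 + z^(2*(n+1)-1) * w) := by
  refine multipliable_one_add _ ?_
  refine Summable.congr (summable_geom_aux (norm_nonneg z) (norm_lt_one hz) (‖z‖ * ‖w‖)) ?_
  intro n
  rw [norm_mul, norm_pow, show 2*(n+1)-1 = 2*n+1 from by omega]
  rw [← pow_mul]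
  ring

lemma hH (hz : ‖z‖ < 1) :
    Tendsto (fun N => hp z N) atTop (𝓝 (∏' n : ℕ, (1 - z^(2*(n+1))))) :=
  (mA hz).hasProd.tendsto_prod_nat

lemma exp_half_lt_two : Real.exp (1/2) < 2 := by
  nlinarith [Real.exp_one_lt_d9, Real.exp_pos (1/2),
    Real.exp_add (1/2) (1/2), sq_nonneg (Real.exp (1/2) - 2)]

lemma Hne (hz : ‖z‖ < 1) : (∏' n : ℕ, (1 - z^(2*(n+1)))) ≠ 0 := by
  set a := ‖z‖ with haa
  have ha0 : 0 ≤ a := norm_nonneg z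
  have ha1 : a < 1 := norm_lt_one hz
  set S := ∑' n : ℕ, a^(2*(n+1)) with hS
  have hSsum : Summable (fun n : ℕ => a^(2*(n+1))) := summable_pow_two_mul hz
  have hSnn : 0 ≤ S := tsum_nonneg fun n => by positivity
  -- choose K
  obtain ⟨K, hK⟩ : ∃ K : ℕ, (a^2)^K < (1/2)/(S+1) := by
    have := (tendsto_pow_atTop_nhds_zero_of_lt_one (by positivity : (0:ℝ) ≤ a^2)
      (by nlinarith)).eventually (gt_mem_nhds (show (0:ℝ) < (1/2)/(S+1) from by positivity))
    exact this.exists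
  have hKS : a^(2*K) * S ≤ 1/2 := by
    have h1 : a^(2*K) = (a^2)^K := by rw [← pow_mul]
    have h2 : (a^2)^K * S ≤ ((1/2)/(S+1)) * S := by
      refine mul_le_mul_of_nonneg_right hK.le hSnn
    have h3 : ((1/2)/(S+1)) * S ≤ 1/2 := by
      rw [div_mul_eq_mul_div, div_le_iff₀ (by linarith)]
      nlinarith
    linarith [h1 ▸ (h2.trans h3)]
  -- tail
  have sTail : Summable (fun n : ℕ => ‖-(z^(2*(K+n+1)))‖) := by
    refine Summable.congr (summable_geom_aux ha0 ha1 (a^(2*(K+1)))) ?_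
    intro n
    rw [norm_neg, norm_pow, ← pow_mul, ← pow_add, haa]
    congr 1
    ring
  have tailsum : ∑' n : ℕ, ‖-(z^(2*(K+n+1)))‖ ≤ 1/2 := by
    have heq : ∀ n : ℕ, ‖-(z^(2*(K+n+1)))‖ = a^(2*K) * a^(2*(n+1)) := by
      intro n
      rw [norm_neg, norm_pow, ← pow_add, haa]
      congr 1
      ring
    calc ∑' n : ℕ, ‖-(z^(2*(K+n+1)))‖ = ∑' n : ℕ, a^(2*K) * a^(2*(n+1)) :=
          tsum_congr heq
      _ = a^(2*K) * S := by rw [tsum_mul_left]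
      _ ≤ 1/2 := hKS
  have mTail := multipliable_one_add _ sTail
  set T := ∏' n : ℕ, (1 + -(z^(2*(K+n+1)))) with hT
  have hTne : T ≠ 0 := by
    intro h0
    have := tprod_one_add_sub_one_norm_le _ sTail
    rw [← hT, h0] at this
    simp only [zero_sub, norm_neg, norm_one] at this
    have h2 : Real.exp (∑' n : ℕ, ‖-(z^(2*(K+n+1)))‖) ≤ Real.exp (1/2) :=
      Real.exp_le_exp.2 tailsum
    simp only [norm_neg] at h2
    linarith [exp_half_lt_two]
  have hsplit : ∀ j : ℕ, hp z (K+j) = hp z K * ∏ n ∈ Finset.range j, (1 + -(z^(2*(K+n+1)))) := by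
    intro j
    have heq2 : ∏ n ∈ Finset.range j, (1 - z^(2*(K+n+1))) =
        ∏ n ∈ Finset.range j, (1 + -(z^(2*(K+n+1)))) :=
      Finset.prod_congr rfl fun n _ => by rw [sub_eq_add_neg]
    rw [hp, Finset.prod_range_add, heq2, ← hp]
  have htend1 : Tendsto (fun j : ℕ => hp z (K+j)) atTop (𝓝 (∏' n : ℕ, (1 - z^(2*(n+1))))) := by
    refine (hH hz).comp ?_
    refine tendsto_atTop_atTop.2 fun b => ⟨b, fun c hc => by omega⟩
  have htend2 : Tendsto (fun j : ℕ => hp z (K+j)) atTop (𝓝 (hp z K * T)) := by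
    refine Tendsto.congr (fun j => (hsplit j).symm) ?_
    exact (mTail.hasProd.tendsto_prod_nat).const_mul (hp z K)
  have := tendsto_nhds_unique htend1 htend2
  rw [this]
  exact mul_ne_zero (hp_ne hz K) hTne

lemma Pbound (hz : ‖z‖ < 1) (j : ℕ) :
    ‖hp z j‖ ≤ Real.exp (∑' n : ℕ, ‖z‖^(2*(n+1))) := by
  have hSsum := summable_pow_two_mul hz
  calc ‖hp z j‖ ≤ ∏ n ∈ Finset.range j, (1 + ‖z‖^(2*(n+1))) := by
        refine (Finset.norm_prod_le _ _).trans ?_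
        refine Finset.prod_le_prod (fun n _ => norm_nonneg _) fun n _ => ?_
        refine (norm_sub_le _ _).trans ?_
        rw [norm_one, norm_pow]
    _ ≤ Real.exp (∑ n ∈ Finset.range j, ‖z‖^(2*(n+1))) :=
        prod_one_add_le_exp _ _ fun n => by positivity
    _ ≤ Real.exp (∑' n : ℕ, ‖z‖^(2*(n+1))) :=
        Real.exp_le_exp.2 (Summable.sum_le_tsum _ (fun n _ => by positivity) hSsum)

lemma cbound (hz : ‖z‖ < 1) : ∃ c, 0 < c ∧ ∀ j, c ≤ ‖hp z j‖ := by
  refine exists_pos_forall_le _ (fun j => norm_pos_iff.2 (hp_ne hz j)) ‖∏' n : ℕ, (1 - z^(2*(n+1)))‖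
    (norm_pos_iff.2 (Hne hz)) ?_
  exact (hH hz).norm

end JTP3

namespace JTP3
open Filter Finset Topology JTP JTP2

noncomputable def fN (z y : ℂ) (N : ℕ) (m : ℤ) : ℂ :=
  if m.natAbs ≤ N then hp z N * gb z (2*N) (((N:ℤ)+m).toNat) * z^(m^2) * y^m else 0

lemma tsum_fN {z y : ℂ} (hz : ‖z‖ < 1) (hz0 : z ≠ 0) (hy : y ≠ 0) (N : ℕ) :
    ∑' m : ℤ, fN z y N m
      = ∏ n ∈ Finset.range N, ((1 - z ^ (2 * (n + 1))) * (1 + z ^ (2 * (n + 1) - 1) * y) *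
          (1 + z ^ (2 * (n + 1) - 1) * y⁻¹)) := by
  have hsupp : ∀ m : ℤ, m ∉ Finset.Icc (-(N:ℤ)) (N:ℤ) → fN z y N m = 0 := by
    intro m hm
    rw [Finset.mem_Icc] at hm
    rw [fN, if_neg (by omega)]
  rw [tsum_eq_sum hsupp, finite_jacobi hz hz0 hy N]
  refine Finset.sum_nbij' (i := fun m => ((N:ℤ)+m).toNat) (j := fun k => (k:ℤ) - N)
    ?_ ?_ ?_ ?_ ?_
  · intro m hm
    rw [Finset.mem_Icc] at hm
    simp only [Finset.mem_range]
    omega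
  · intro k hk
    rw [Finset.mem_range] at hk
    rw [Finset.mem_Icc]
    omega
  · intro m hm
    rw [Finset.mem_Icc] at hm
    omega
  · intro k hk
    rw [Finset.mem_range] at hk
    omega
  · intro m hm
    rw [Finset.mem_Icc] at hm
    rw [fN, if_pos (by omega)]
    rw [show ((((N:ℤ)+m).toNat : ℕ) : ℤ) - (N:ℤ) = m from by omega]

end JTP3

namespace JTP3
open Filter Finset Topology JTP JTP2

lemma fN_norm_le {z y : ℂ} (hz : ‖z‖ < 1) {c P r : ℝ} (hc : 0 < c)
    (hcle : ∀ j, c ≤ ‖hp z j‖) (hP : ∀ j, ‖hp z j‖ ≤ P)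
    (hr1 : ‖y‖ ≤ r) (hr2 : ‖y⁻¹‖ ≤ r) (N : ℕ) (m : ℤ) :
    ‖fN z y N m‖ ≤ P*P/(c*c) * ‖z‖^(m.natAbs^2) * r^(m.natAbs) := by
  have hP0 : 0 < P := lt_of_lt_of_le (lt_of_lt_of_le hc (hcle 0)) (hP 0)
  have hr0 : 0 ≤ r := le_trans (norm_nonneg _) hr1
  rw [fN]
  split_ifs with hm
  · have hk2 : (((N:ℤ)+m).toNat) ≤ 2*N := by omega
    have hsub : 2*N - (((N:ℤ)+m).toNat) = ((N:ℤ)-m).toNat := by omega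
    have hgb : hp z N * gb z (2*N) (((N:ℤ)+m).toNat)
        = hp z N * hp z (2*N) / (hp z (((N:ℤ)+m).toNat) * hp z (((N:ℤ)-m).toNat)) := by
      rw [gb, if_pos hk2, hsub]
      ring
    have h1 : ‖hp z N * gb z (2*N) (((N:ℤ)+m).toNat)‖ ≤ P*P/(c*c) := by
      rw [hgb, norm_div, norm_mul, norm_mul]
      refine div_le_div₀ (by positivity) ?_ (by positivity) ?_
      · exact mul_le_mul (hP _) (hP _) (norm_nonneg _) hP0.le
      · exact mul_le_mul (hcle _) (hcle _) hc.le (norm_nonneg _)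
    have h2 : ‖z^(m^2)‖ = ‖z‖^(m.natAbs^2) := by
      rw [show (m^2 : ℤ) = ((m.natAbs^2 : ℕ) : ℤ) from by
          rw [← Int.natAbs_sq m]; push_cast; ring,
        zpow_natCast, norm_pow]
    have h3 : ‖y^m‖ ≤ r^(m.natAbs) := by
      rcases Int.eq_nat_or_neg m with ⟨n, rfl | rfl⟩
      · rw [zpow_natCast, norm_pow, Int.natAbs_natCast]
        exact pow_le_pow_left₀ (norm_nonneg _) hr1 n
      · rw [zpow_neg, zpow_natCast, ← inv_pow, norm_pow, Int.natAbs_neg, Int.natAbs_natCast]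
        exact pow_le_pow_left₀ (norm_nonneg _) hr2 n
    calc ‖hp z N * gb z (2*N) (((N:ℤ)+m).toNat) * z^(m^2) * y^m‖
        = ‖hp z N * gb z (2*N) (((N:ℤ)+m).toNat)‖ * ‖z^(m^2)‖ * ‖y^m‖ := by
          rw [norm_mul, norm_mul]
      _ ≤ P*P/(c*c) * ‖z‖^(m.natAbs^2) * r^(m.natAbs) := by
          refine mul_le_mul (mul_le_mul h1 h2.le (norm_nonneg _) (by positivity)) h3
            (norm_nonneg _) (by positivity)
  · simp only [norm_zero]
    positivity

lemma fN_tendsto {z y : ℂ} (hz : ‖z‖ < 1) (m : ℤ) :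
    Tendsto (fun N => fN z y N m) atTop (𝓝 (z^(m^2) * y^m)) := by
  have hHne := Hne hz
  have hmulne : (∏' n : ℕ, (1 - z^(2*(n+1)))) * (∏' n : ℕ, (1 - z^(2*(n+1)))) ≠ 0 :=
    mul_ne_zero hHne hHne
  have t1 : Tendsto (fun N : ℕ => hp z N * hp z (2*N)) atTop
      (𝓝 ((∏' n : ℕ, (1 - z^(2*(n+1)))) * (∏' n : ℕ, (1 - z^(2*(n+1)))))) :=
    (hH hz).mul ((hH hz).comp (tendsto_atTop_atTop.2 fun b => ⟨b, fun a ha => by omega⟩))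
  have t2 : Tendsto (fun N : ℕ => hp z (((N:ℤ)+m).toNat) * hp z (((N:ℤ)-m).toNat)) atTop
      (𝓝 ((∏' n : ℕ, (1 - z^(2*(n+1)))) * (∏' n : ℕ, (1 - z^(2*(n+1)))))) := by
    refine Tendsto.mul ((hH hz).comp (tendsto_atTop_atTop.2 fun b => ⟨b + m.natAbs,
      fun a ha => by omega⟩)) ((hH hz).comp (tendsto_atTop_atTop.2 fun b => ⟨b + m.natAbs,
      fun a ha => by omega⟩))
  have t3 : Tendsto (fun N : ℕ => (hp z N * hp z (2*N)) /
      (hp z (((N:ℤ)+m).toNat) * hp z (((N:ℤ)-m).toNat))) atTop (𝓝 1) := by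
    have := t1.div t2 hmulne
    rwa [div_self hmulne] at this
  have t4 := t3.mul_const (z^(m^2) * y^m)
  rw [one_mul] at t4
  refine Tendsto.congr' ?_ t4
  filter_upwards [eventually_ge_atTop m.natAbs] with N hN
  rw [fN, if_pos hN, gb, if_pos (by omega : (((N:ℤ)+m).toNat) ≤ 2*N),
    show 2*N - (((N:ℤ)+m).toNat) = ((N:ℤ)-m).toNat from by omega]
  ring

end JTP3

theorem jacobi_triple_product (z y : ℂ) (hz : ‖z‖ < 1) (hy : y ≠ 0) :
    (∏' n : ℕ, ((1 - z ^ (2 * (n + 1))) * (1 + z ^ (2 * (n + 1) - 1) * y) *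
        (1 + z ^ (2 * (n + 1) - 1) * y⁻¹))) =
      ∑' k : ℤ, z ^ (k ^ 2) * y ^ k := by
  open Filter Finset Topology JTP JTP2 JTP3 in
  by_cases hz0 : z = 0
  · subst hz0
    have hL : ∀ n : ℕ, (1 - (0:ℂ) ^ (2 * (n + 1))) * (1 + (0:ℂ) ^ (2 * (n + 1) - 1) * y) *
        (1 + (0:ℂ) ^ (2 * (n + 1) - 1) * y⁻¹) = 1 := by
      intro n
      rw [zero_pow (by omega : 2*(n+1) ≠ 0), zero_pow (by omega : 2*(n+1)-1 ≠ 0)]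
      ring
    rw [tprod_congr hL, tprod_one]
    rw [tsum_eq_single 0 (fun k hk => by
      rw [zero_zpow _ (by simpa using pow_ne_zero 2 hk : (k:ℤ)^2 ≠ 0), zero_mul])]
    norm_num
  · obtain ⟨c, hc, hcle⟩ := cbound hz
    have hP := Pbound hz
    have hr1 : ‖y‖ ≤ max ‖y‖ ‖y⁻¹‖ := le_max_left _ _
    have hr2 : ‖y⁻¹‖ ≤ max ‖y‖ ‖y⁻¹‖ := le_max_right _ _
    have hrpos : 0 < max ‖y‖ ‖y⁻¹‖ := lt_of_lt_of_le (norm_pos_iff.2 hy) hr1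
    have hz0' : 0 < ‖z‖ := norm_pos_iff.2 hz0
    have hbase : Summable (fun n : ℕ => ‖z‖^(n^2) * (max ‖y‖ ‖y⁻¹‖)^n) :=
      summable_sq_pow hz0' (norm_lt_one hz) hrpos
    have hsummable : Summable (fun m : ℤ =>
        Real.exp (∑' n : ℕ, ‖z‖^(2*(n+1))) * Real.exp (∑' n : ℕ, ‖z‖^(2*(n+1))) / (c*c)
          * ‖z‖^(m.natAbs^2) * (max ‖y‖ ‖y⁻¹‖)^(m.natAbs)) := by
      set C := Real.exp (∑' n : ℕ, ‖z‖^(2*(n+1))) * Real.exp (∑' n : ℕ, ‖z‖^(2*(n+1))) / (c*c)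
      refine Summable.of_nat_of_neg ?_ ?_
      · refine ((hbase.mul_left C).congr ?_)
        intro n
        simp [Int.natAbs_natCast, mul_assoc]
      · refine ((hbase.mul_left C).congr ?_)
        intro n
        simp [Int.natAbs_neg, Int.natAbs_natCast, mul_assoc]
    have htannery := tendsto_tsum_of_dominated_convergence (𝓕 := atTop)
      (f := fun N m => fN z y N m) (g := fun k : ℤ => z ^ (k ^ 2) * y ^ k) hsummable
      (fun m => fN_tendsto hz m)
      (Eventually.of_forall fun N m =>
        fN_norm_le hz hc hcle hP hr1 hr2 N m)
    have hmF : Multipliable (fun n : ℕ => (1 - z ^ (2 * (n + 1))) *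
        (1 + z ^ (2 * (n + 1) - 1) * y) * (1 + z ^ (2 * (n + 1) - 1) * y⁻¹)) := by
      have h := ((mA hz).hasProd.mul (mBC hz y).hasProd).mul (mBC hz y⁻¹).hasProd
      exact h.multipliable.congr fun n => rfl
    have hprod := hmF.hasProd.tendsto_prod_nat
    have htan2 := htannery.congr (fun N => tsum_fN hz hz0 hy N)
    exact tendsto_nhds_unique hprod htan2
end

section
/- The equation sin(πb) + (3√3/8)·b = 0 has exactly three solutions b in [0, ∞): b = 0, b = 4/3, and exactly one solution in the open interval (4/3, 5/3); moreover there are no solutions with b > 5/3. -/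
open scoped Real

noncomputable def gfun : ℝ → ℝ := fun b => Real.sin (Real.pi * b) + 3 * Real.sqrt 3 / 8 * b

lemma sqrt3_lb : (1.732 : ℝ) < Real.sqrt 3 := by
  nlinarith [Real.sq_sqrt (by norm_num : (3:ℝ) ≥ 0), Real.sqrt_nonneg 3]

lemma sqrt3_ub : Real.sqrt 3 < 1.7321 := by
  nlinarith [Real.sq_sqrt (by norm_num : (3:ℝ) ≥ 0), Real.sqrt_nonneg 3]

lemma gfun_hasDeriv (b : ℝ) :
    HasDerivAt gfun (Real.pi * Real.cos (Real.pi * b) + 3 * Real.sqrt 3 / 8) b := by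
  have h1 : HasDerivAt (fun b : ℝ => Real.pi * b) Real.pi b := by
    simpa using (hasDerivAt_id b).const_mul Real.pi
  have h2 := (Real.hasDerivAt_sin (Real.pi * b)).comp b h1
  have h3 : HasDerivAt (fun b : ℝ => 3 * Real.sqrt 3 / 8 * b) (3 * Real.sqrt 3 / 8) b := by
    simpa using (hasDerivAt_id b).const_mul (3 * Real.sqrt 3 / 8)
  have h4 : Real.cos (Real.pi * b) * Real.pi + 3 * Real.sqrt 3 / 8
      = Real.pi * Real.cos (Real.pi * b) + 3 * Real.sqrt 3 / 8 := by ring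
  exact h4 ▸ (h2.add h3)

lemma gfun_cont : Continuous gfun := by
  unfold gfun; fun_prop

lemma gfun_anti : StrictAntiOn gfun (Set.Icc 1 (17/12 : ℝ)) := by
  apply strictAntiOn_of_deriv_neg (convex_Icc _ _) gfun_cont.continuousOn
  intro x hx
  rw [interior_Icc] at hx
  rw [(gfun_hasDeriv x).deriv]
  have hπ := Real.pi_gt_d6
  have hπ' := Real.pi_lt_d6
  -- cos (π x) = cos (2π - π x), and 7π/12 < 2π - πx ≤ π
  have hcoseq : Real.cos (Real.pi * x) = Real.cos (2 * Real.pi - Real.pi * x) :=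
    (Real.cos_two_pi_sub _).symm
  have hlt : Real.cos (2 * Real.pi - Real.pi * x) < Real.cos (Real.pi / 12 + Real.pi / 2) := by
    apply Real.cos_lt_cos_of_nonneg_of_le_pi (by positivity)
    · nlinarith [hx.1]
    · nlinarith [hx.2]
  rw [Real.cos_add_pi_div_two] at hlt
  have hsin : Real.pi / 12 - (Real.pi / 12) ^ 3 / 4 < Real.sin (Real.pi / 12) :=
    by have := Real.sin_gt_sub_cube (x := Real.pi / 12) (by positivity); nlinarith [pow_pos (show (0:ℝ) < Real.pi / 12 by positivity) 3]
  have hcos : Real.cos (Real.pi * x) < -(Real.pi / 12 - (Real.pi / 12) ^ 3 / 4) := by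
    rw [hcoseq]; linarith
  have h3 := sqrt3_ub
  have hp2 : (9.8696:ℝ) < Real.pi ^ 2 := by nlinarith
  have hp2' : Real.pi ^ 2 < 9.86962 := by nlinarith
  have hp4 : Real.pi ^ 4 < 97.4095 := by nlinarith [Real.pi_pos]
  nlinarith [Real.pi_pos, mul_lt_mul_of_pos_left hcos Real.pi_pos]

lemma gfun_mono : StrictMonoOn gfun (Set.Icc (13/9 : ℝ) (5/3)) := by
  apply strictMonoOn_of_deriv_pos (convex_Icc _ _) gfun_cont.continuousOn
  intro x hx
  rw [interior_Icc] at hx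
  rw [(gfun_hasDeriv x).deriv]
  have hπ := Real.pi_gt_d6
  have hπ' := Real.pi_lt_d6
  have hcoseq : Real.cos (Real.pi * x) = Real.cos (2 * Real.pi - Real.pi * x) :=
    (Real.cos_two_pi_sub _).symm
  have hlt : Real.cos (Real.pi / 18 + Real.pi / 2) < Real.cos (2 * Real.pi - Real.pi * x) := by
    apply Real.cos_lt_cos_of_nonneg_of_le_pi
    · nlinarith [hx.2]
    · nlinarith
    · nlinarith [hx.1]
  rw [Real.cos_add_pi_div_two] at hlt
  have hsin : Real.sin (Real.pi / 18) < Real.pi / 18 := Real.sin_lt (by positivity)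
  have hcos : -(Real.pi / 18) < Real.cos (Real.pi * x) := by
    rw [hcoseq]; linarith
  have h3 := sqrt3_lb
  have hp2 : Real.pi ^ 2 < 9.8697 := by nlinarith
  nlinarith [Real.pi_pos, mul_lt_mul_of_pos_left hcos Real.pi_pos]

lemma gfun_mid : ∀ b ∈ Set.Icc (17/12 : ℝ) (13/9), gfun b < 0 := by
  intro b hb
  have hπ := Real.pi_gt_d6
  have hπ' := Real.pi_lt_d6
  -- sin (π b) = - sin (π b - π)
  have heq : Real.sin (Real.pi * b) = -Real.sin (Real.pi * b - Real.pi) := by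
    have h := Real.sin_pi_sub (Real.pi * b - Real.pi)
    have h2 := Real.sin_two_pi_sub (Real.pi * b)
    have h3 : Real.pi - (Real.pi * b - Real.pi) = 2 * Real.pi - Real.pi * b := by ring
    rw [h3] at h
    linarith
  have hmem1 : Real.pi / 2 - Real.pi / 12 ∈ Set.Icc (-(Real.pi / 2)) (Real.pi / 2) := by
    constructor <;> nlinarith
  have hmem2 : Real.pi * b - Real.pi ∈ Set.Icc (-(Real.pi / 2)) (Real.pi / 2) := by
    constructor <;> nlinarith [hb.1, hb.2]
  have hmono : Real.sin (Real.pi / 2 - Real.pi / 12) ≤ Real.sin (Real.pi * b - Real.pi) := by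
    apply Real.strictMonoOn_sin.monotoneOn hmem1 hmem2
    nlinarith [hb.1]
  rw [Real.sin_pi_div_two_sub] at hmono
  have hcos : 1 - (Real.pi / 12) ^ 2 / 2 < Real.cos (Real.pi / 12) :=
    Real.one_sub_sq_div_two_lt_cos (by positivity)
  have h3 := sqrt3_ub
  have hgb : gfun b = -Real.sin (Real.pi * b - Real.pi) + 3 * Real.sqrt 3 / 8 * b := by
    simp only [gfun]; rw [heq]
  rw [hgb]
  nlinarith [hb.2, Real.sqrt_nonneg 3]

lemma gfun_43 : gfun (4/3) = 0 := by
  have heq : Real.pi * (4/3) = 2 * Real.pi - (Real.pi - Real.pi / 3) := by ring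
  simp only [gfun]
  rw [heq, Real.sin_two_pi_sub, Real.sin_pi_sub, Real.sin_pi_div_three]
  ring

lemma gfun_53 : 0 < gfun (5/3) := by
  have heq : Real.pi * (5/3) = 2 * Real.pi - Real.pi / 3 := by ring
  simp only [gfun]
  rw [heq, Real.sin_two_pi_sub, Real.sin_pi_div_three]
  nlinarith [sqrt3_lb]

theorem three_roots (f : ℝ → ℝ)
    (hf : ∀ b, f b = Real.sin (Real.pi * b) + 3 * Real.sqrt 3 / 8 * b) :
    f 0 = 0 ∧ f (4 / 3) = 0 ∧
      (∃! b, b ∈ Set.Ioo (4 / 3 : ℝ) (5 / 3) ∧ f b = 0) ∧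
      ∀ b : ℝ, 0 ≤ b → f b = 0 →
        b = 0 ∨ b = 4 / 3 ∨ b ∈ Set.Ioo (4 / 3 : ℝ) (5 / 3) := by
  have hfe : f = gfun := funext hf
  subst hfe
  have h43 : gfun (4/3) = 0 := gfun_43
  have h139 : gfun (13/9) < 0 := gfun_mid (13/9) (by constructor <;> norm_num)
  -- root in (13/9, 5/3)
  obtain ⟨x, hxmem, hgx⟩ : ∃ x ∈ Set.Icc (13/9 : ℝ) (5/3), gfun x = 0 := by
    have hsub := intermediate_value_Icc (by norm_num : (13/9:ℝ) ≤ 5/3) gfun_cont.continuousOn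
    have h0 : (0:ℝ) ∈ Set.Icc (gfun (13/9)) (gfun (5/3)) := ⟨h139.le, gfun_53.le⟩
    obtain ⟨x, hx, hgx⟩ := hsub h0
    exact ⟨x, hx, hgx⟩
  have hx1 : 13/9 < x := by
    rcases eq_or_lt_of_le hxmem.1 with h | h
    · exfalso; rw [h] at h139; linarith [hgx]
    · exact h
  have hx2 : x < 5/3 := by
    rcases eq_or_lt_of_le hxmem.2 with h | h
    · exfalso; rw [h] at hgx; linarith [gfun_53]
    · exact h
  -- key: any root in (4/3, 5/3) must be in (13/9, 5/3)
  have hkey : ∀ y ∈ Set.Ioo (4/3 : ℝ) (5/3), gfun y = 0 → 13/9 < y := by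
    intro y hy hgy
    by_contra hle
    push_neg at hle
    by_cases h17 : y ≤ 17/12
    · have := gfun_anti (Set.mem_Icc.2 ⟨by norm_num, by linarith [hy.1]⟩)
        (Set.mem_Icc.2 ⟨by linarith [hy.1], h17⟩) hy.1
      rw [h43] at this
      linarith
    · push_neg at h17
      have := gfun_mid y ⟨h17.le, hle⟩
      linarith
  refine ⟨?_, h43, ⟨x, ⟨⟨by linarith, hx2⟩, hgx⟩, ?_⟩, ?_⟩
  · simp [gfun]
  · rintro y ⟨hy, hgy⟩
    have hy139 := hkey y hy hgy
    exact gfun_mono.injOn (Set.mem_Icc.2 ⟨hy139.le, hy.2.le⟩)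
      (Set.mem_Icc.2 ⟨hx1.le, hx2.le⟩) (by rw [hgy, hgx])
  · intro b hb0 hgb
    rcases eq_or_lt_of_le hb0 with h0 | h0
    · exact Or.inl h0.symm
    by_cases h53 : 5/3 ≤ b
    · exfalso
      have hs := Real.neg_one_le_sin (Real.pi * b)
      have hc : (0:ℝ) ≤ 3 * Real.sqrt 3 / 8 := by positivity
      have := mul_le_mul_of_nonneg_left h53 hc
      simp only [gfun] at hgb
      nlinarith [sqrt3_lb]
    push_neg at h53
    by_cases h1 : b ≤ 1
    · exfalso
      have hs : 0 ≤ Real.sin (Real.pi * b) :=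
        Real.sin_nonneg_of_nonneg_of_le_pi (by positivity)
          (by nlinarith [Real.pi_pos])
      simp only [gfun] at hgb
      nlinarith [sqrt3_lb]
    push_neg at h1
    rcases lt_trichotomy b (4/3) with h | h | h
    · exfalso
      have := gfun_anti (Set.mem_Icc.2 ⟨h1.le, by linarith⟩)
        (Set.mem_Icc.2 ⟨by norm_num, by norm_num⟩) h
      rw [h43, hgb] at this
      linarith
    · exact Or.inr (Or.inl h)
    · exact Or.inr (Or.inr ⟨h, h53⟩)
end

section
/- There exists a unique real number x in the open interval (1/4, 2/3) satisfying √(36x + 3)/4 + sin(2π√(12x + 1)/3) = 0. -/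
open scoped Real

noncomputable def gB : ℝ → ℝ := fun t => Real.sqrt 3 * t / 4 + Real.sin (2 * Real.pi * t / 3)

lemma gB_hasDeriv (t : ℝ) :
    HasDerivAt gB (Real.sqrt 3 / 4 + Real.cos (2 * Real.pi * t / 3) * (2 * Real.pi / 3)) t := by
  have h1 : HasDerivAt (fun s : ℝ => 2 * Real.pi * s / 3) (2 * Real.pi / 3) t := by
    simpa using ((hasDerivAt_id t).const_mul (2 * Real.pi)).div_const 3
  have h2 : HasDerivAt (fun s : ℝ => Real.sin (2 * Real.pi * s / 3))
      (Real.cos (2 * Real.pi * t / 3) * (2 * Real.pi / 3)) t :=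
    h1.sin
  have h3 : HasDerivAt (fun s : ℝ => Real.sqrt 3 * s / 4) (Real.sqrt 3 / 4) t := by
    simpa using ((hasDerivAt_id t).const_mul (Real.sqrt 3)).div_const 4
  exact h3.add h2

lemma gB_deriv : deriv gB = fun t =>
    Real.sqrt 3 / 4 + Real.cos (2 * Real.pi * t / 3) * (2 * Real.pi / 3) := by
  funext t
  exact (gB_hasDeriv t).deriv

lemma sin_neg_on (t : ℝ) (ht : t ∈ Set.Ioo (2 : ℝ) 3) : Real.sin (2 * Real.pi * t / 3) < 0 := by
  have hpi := Real.pi_pos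
  have h1 : 2 * Real.pi * t / 3 - 2 * Real.pi < 0 := by nlinarith [ht.2]
  have h2 : -Real.pi < 2 * Real.pi * t / 3 - 2 * Real.pi := by nlinarith [ht.1]
  have := Real.sin_neg_of_neg_of_neg_pi_lt h1 h2
  rwa [Real.sin_sub_two_pi] at this

lemma gB_strictConvex : StrictConvexOn ℝ (Set.Icc (2 : ℝ) 3) gB := by
  apply StrictMonoOn.strictConvexOn_of_deriv (convex_Icc 2 3)
  · unfold gB; fun_prop
  · rw [interior_Icc, gB_deriv]
    have key : StrictMonoOn
        (fun t : ℝ => Real.sqrt 3 / 4 + Real.cos (2 * Real.pi * t / 3) * (2 * Real.pi / 3))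
        (Set.Icc (2 : ℝ) 3) := by
      apply strictMonoOn_of_deriv_pos (convex_Icc 2 3)
      · fun_prop
      · intro t ht
        rw [interior_Icc] at ht
        have h1 : HasDerivAt (fun s : ℝ => 2 * Real.pi * s / 3) (2 * Real.pi / 3) t := by
          simpa using ((hasDerivAt_id t).const_mul (2 * Real.pi)).div_const 3
        have h2 : HasDerivAt
            (fun s : ℝ => Real.sqrt 3 / 4 + Real.cos (2 * Real.pi * s / 3) * (2 * Real.pi / 3))
            ((-Real.sin (2 * Real.pi * t / 3) * (2 * Real.pi / 3)) * (2 * Real.pi / 3)) t := by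
          simpa using
            (((Real.hasDerivAt_cos (2 * Real.pi * t / 3)).comp t h1).mul_const
              (2 * Real.pi / 3)).const_add (Real.sqrt 3 / 4)
        rw [h2.deriv]
        have hs := sin_neg_on t ht
        have hpi := Real.pi_pos
        exact mul_pos (mul_pos (by linarith : (0:ℝ) < -Real.sin (2 * Real.pi * t / 3))
          (by positivity)) (by positivity)
    exact key.mono Set.Ioo_subset_Icc_self

lemma gB_two : gB 2 = 0 := by
  have h : 2 * Real.pi * 2 / 3 = Real.pi / 3 + Real.pi := by ring
  rw [gB, h, Real.sin_add_pi, Real.sin_pi_div_three]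
  ring

lemma gB_zero_unique {t₁ t₂ : ℝ} (h₁ : t₁ ∈ Set.Ioo (2 : ℝ) 3) (h₂ : t₂ ∈ Set.Ioo (2 : ℝ) 3)
    (hg₁ : gB t₁ = 0) (hg₂ : gB t₂ = 0) : t₁ = t₂ := by
  -- WLOG-style: show no two distinct zeros
  have key : ∀ a b : ℝ, a ∈ Set.Ioo (2 : ℝ) 3 → b ∈ Set.Ioo (2 : ℝ) 3 → a < b →
      gB a = 0 → gB b = 0 → False := by
    intro a b ha hb hab hga hgb
    -- a is a strict convex combination of 2 and b
    set lam : ℝ := (a - 2) / (b - 2) with hlam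
    have hb2 : (0 : ℝ) < b - 2 := by linarith [hb.1]
    have hlam0 : 0 < lam := div_pos (by linarith [ha.1]) hb2
    have hlam1 : lam < 1 := (div_lt_one hb2).2 (by linarith)
    have hcomb : (1 - lam) * 2 + lam * b = a := by
      rw [hlam]; field_simp
      ring
    have h2mem : (2 : ℝ) ∈ Set.Icc (2 : ℝ) 3 := by constructor <;> norm_num
    have hbmem : b ∈ Set.Icc (2 : ℝ) 3 := Set.Ioo_subset_Icc_self hb
    have hne : (2 : ℝ) ≠ b := by linarith [hb.1]
    have := gB_strictConvex.2 h2mem hbmem hne (by linarith : (0:ℝ) < 1 - lam) hlam0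
      (by ring)
    simp only [smul_eq_mul] at this
    rw [hcomb, hga, gB_two, hgb] at this
    linarith
  rcases lt_trichotomy t₁ t₂ with h | h | h
  · exact absurd (key t₁ t₂ h₁ h₂ h hg₁ hg₂) not_false
  · exact h
  · exact absurd (key t₂ t₁ h₂ h₁ h hg₂ hg₁) not_false

lemma sqrt3_sq : Real.sqrt 3 ^ 2 = 3 := Real.sq_sqrt (by norm_num)

lemma gB_exists : ∃ t ∈ Set.Ioo (9/4 : ℝ) 3, gB t = 0 := by
  have hc : ContinuousOn gB (Set.Icc (9/4 : ℝ) 3) := by unfold gB; fun_prop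
  have hneg : gB (9/4) < 0 := by
    have h : 2 * Real.pi * (9/4) / 3 = Real.pi / 2 + Real.pi := by ring
    rw [gB, h, Real.sin_add_pi, Real.sin_pi_div_two]
    nlinarith [sqrt3_sq, Real.sqrt_nonneg 3]
  have hpos : (0:ℝ) < gB 3 := by
    have h : 2 * Real.pi * 3 / 3 = 2 * Real.pi := by ring
    rw [gB, h, Real.sin_two_pi]
    nlinarith [sqrt3_sq, Real.sqrt_nonneg 3]
  have := intermediate_value_Ioo (by norm_num : (9/4:ℝ) ≤ 3) hc
  have h0 : (0:ℝ) ∈ Set.Ioo (gB (9/4)) (gB 3) := ⟨hneg, hpos⟩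
  obtain ⟨t, ht, hgt⟩ := this h0
  exact ⟨t, ht, hgt⟩

theorem backbone_exponent_exists_unique :
    ∃! x : ℝ, x ∈ Set.Ioo (1 / 4 : ℝ) (2 / 3) ∧
      Real.sqrt (36 * x + 3) / 4 + Real.sin (2 * Real.pi * Real.sqrt (12 * x + 1) / 3) = 0 := by
  -- key translation lemma
  have trans : ∀ x : ℝ, x ∈ Set.Ioo (1 / 4 : ℝ) (2 / 3) →
      (Real.sqrt (12 * x + 1) ∈ Set.Ioo (2:ℝ) 3 ∧
        (Real.sqrt (36 * x + 3) / 4 + Real.sin (2 * Real.pi * Real.sqrt (12 * x + 1) / 3) =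
          gB (Real.sqrt (12 * x + 1)))) := by
    intro x hx
    set t := Real.sqrt (12 * x + 1) with hT
    have hx1 : (0:ℝ) ≤ 12 * x + 1 := by nlinarith [hx.1]
    have ht0 : 0 ≤ t := Real.sqrt_nonneg _
    have htsq : t ^ 2 = 12 * x + 1 := Real.sq_sqrt hx1
    have ht2 : 2 < t := by nlinarith [hx.1]
    have ht3 : t < 3 := by nlinarith [hx.2]
    have hrew : Real.sqrt (36 * x + 3) = Real.sqrt 3 * t := by
      have : (36 : ℝ) * x + 3 = 3 * (12 * x + 1) := by ring
      rw [this, Real.sqrt_mul (by norm_num : (0:ℝ) ≤ 3)]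
    refine ⟨⟨ht2, ht3⟩, ?_⟩
    rw [hrew, gB]
  obtain ⟨t, ht, hgt⟩ := gB_exists
  have ht' : t ∈ Set.Ioo (2:ℝ) 3 := ⟨by linarith [ht.1], ht.2⟩
  refine ⟨(t ^ 2 - 1) / 12, ?_, ?_⟩
  · have hxmem : (t ^ 2 - 1) / 12 ∈ Set.Ioo (1 / 4 : ℝ) (2 / 3) := by
      constructor
      · nlinarith [ht'.1]
      · nlinarith [ht'.2, ht'.1]
    have htr := trans _ hxmem
    have hsq : Real.sqrt (12 * ((t ^ 2 - 1) / 12) + 1) = t := by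
      have : 12 * ((t ^ 2 - 1) / 12) + 1 = t ^ 2 := by ring
      rw [this, Real.sqrt_sq (by linarith [ht'.1] : (0:ℝ) ≤ t)]
    refine ⟨hxmem, ?_⟩
    rw [htr.2, hsq, hgt]
  · intro y hy
    obtain ⟨hymem, hyeq⟩ := hy
    have htr := trans y hymem
    have hyg : gB (Real.sqrt (12 * y + 1)) = 0 := by rw [← htr.2]; exact hyeq
    have hsq : Real.sqrt (12 * ((t ^ 2 - 1) / 12) + 1) = t := by
      have : 12 * ((t ^ 2 - 1) / 12) + 1 = t ^ 2 := by ring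
      rw [this, Real.sqrt_sq (by linarith [ht'.1] : (0:ℝ) ≤ t)]
    have heq := gB_zero_unique htr.1 ht' hyg hgt
    have hy1 : (0:ℝ) ≤ 12 * y + 1 := by nlinarith [hymem.1]
    have := Real.sq_sqrt hy1
    rw [heq] at this
    linarith
end
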